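/- There exists u₀ > 0 such that for every u with 0 < u ≤ u₀, one has G(G⁻¹(u)) ≥ u/4. -/

import Mathlib

open Filter Set

/-- `F μ t` is the number of indices `j ≥ 1` with `μ j ≥ t`. -/
noncomputable def F (μ : ℕ → ℝ) (t : ℝ) : ℕ :=
  {j : ℕ | 1 ≤ j ∧ t ≤ μ j}.ncard

/-- `G μ r t = t^(2r+1) / F(t)`. -/
noncomputable def G (μ : ℕ → ℝ) (r t : ℝ) : ℝ :=
  t ^ (2 * r + 1) / (F μ t : ℝ)

/-- The generalized inverse `G⁻¹(u) = max {t > 0 : G(t) ≤ u}` (where the set only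
contains points with `F(t) ≥ 1`, i.e. `G(t) < ∞`). -/
noncomputable def Ginv (μ : ℕ → ℝ) (r u : ℝ) : ℝ :=
  sSup {t : ℝ | 0 < t ∧ 1 ≤ F μ t ∧ G μ r t ≤ u}

private lemma stmt5_finite (μ : ℕ → ℝ) (hlim : Filter.Tendsto μ Filter.atTop (nhds 0))
    {t : ℝ} (ht : 0 < t) : {j : ℕ | 1 ≤ j ∧ t ≤ μ j}.Finite := by
  obtain ⟨N, hN⟩ := Filter.eventually_atTop.mp (hlim.eventually_lt_const ht)
  refine (Set.finite_Iio N).subset ?_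
  intro j hj
  by_contra hjN
  exact absurd hj.2 (not_le.mpr (hN j (not_lt.mp hjN)))

private lemma stmt5_icc {A : Set ℕ} (hfin : A.Finite) (h1 : ∀ j ∈ A, 1 ≤ j)
    (hdc : ∀ i j, j ∈ A → 1 ≤ i → i ≤ j → i ∈ A) :
    A = Set.Icc 1 A.ncard := by
  rcases A.eq_empty_or_nonempty with h | h
  · simp [h]
  · obtain ⟨M, hM, hMmax⟩ : ∃ M ∈ A, ∀ a ∈ A, M ≤ a → M = a := by
      obtain ⟨M, hM, hmax⟩ := Set.exists_max_image A id hfin h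
      exact ⟨M, hM, fun a ha hMa => le_antisymm hMa (hmax a ha)⟩
    have hAM : A = Set.Icc 1 M := by
      ext i
      constructor
      · intro hi
        refine ⟨h1 i hi, ?_⟩
        by_contra hlt
        exact absurd (hMmax i hi (le_of_lt (not_le.mp hlt))) (Nat.ne_of_lt (not_le.mp hlt))
      · intro hi
        exact hdc i M hM hi.1 hi.2
    have hicc : (Set.Icc 1 M).ncard = M := by
      simp [Set.ncard_eq_toFinset_card', Set.toFinset_Icc, Nat.card_Icc]
    rw [hAM, hicc]

/-- under (eigup), there is `u₀ > 0` such that for every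
`0 < u ≤ u₀` one has `G(G⁻¹(u)) ≥ u / 4`. -/
theorem stmt5 (μ : ℕ → ℝ)
    (hpos : ∀ j, 1 ≤ j → 0 < μ j)
    (hanti : ∀ j, 1 ≤ j → μ (j + 1) ≤ μ j)
    (hlim : Filter.Tendsto μ Filter.atTop (nhds 0))
    (ν : ℝ) (hν : 1 ≤ ν) (j₀ : ℕ) (hj₀ : 1 ≤ j₀)
    (heigup : ∀ j, 1 ≤ j → j₀ ≤ j → μ (2 * j) ≤ (2 : ℝ) ^ (-ν) * μ j)
    (r : ℝ) (hr : 0 < r) :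
    ∃ u₀ > 0, ∀ u : ℝ, 0 < u → u ≤ u₀ → u / 4 ≤ G μ r (Ginv μ r u) := by
  set p : ℝ := 2 * r + 1 with hp_def
  have hp : 0 < p := by positivity
  -- monotonicity of μ on [1, ∞)
  have hmono : ∀ i j : ℕ, 1 ≤ i → i ≤ j → μ j ≤ μ i := by
    intro i j hi hij
    induction j, hij using Nat.le_induction with
    | base => exact le_refl _
    | succ n hn ih => exact (hanti n (hi.trans hn)).trans ih
  -- membership gives lower bound on F
  have hFmem : ∀ t : ℝ, 0 < t → ∀ n : ℕ, 1 ≤ n → t ≤ μ n → n ≤ F μ t := by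
    intro t ht n hn htn
    have hsub : Set.Icc 1 n ⊆ {j : ℕ | 1 ≤ j ∧ t ≤ μ j} := by
      intro j hj
      exact ⟨hj.1, htn.trans (hmono j n hj.1 hj.2)⟩
    have := Set.ncard_le_ncard hsub (stmt5_finite μ hlim ht)
    have hicc : (Set.Icc 1 n).ncard = n := by
      simp [Set.ncard_eq_toFinset_card', Set.toFinset_Icc, Nat.card_Icc]
    rw [hicc] at this
    exact this
  -- F is antitone
  have hFanti : ∀ s t : ℝ, 0 < s → s ≤ t → F μ t ≤ F μ s := by
    intro s t hs hst
    refine Set.ncard_le_ncard ?_ (stmt5_finite μ hlim hs)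
    intro j hj
    exact ⟨hj.1, hst.trans hj.2⟩
  -- F ≥ 1 gives a witness
  have hFwit : ∀ t : ℝ, 1 ≤ F μ t → ∃ j : ℕ, 1 ≤ j ∧ t ≤ μ j := by
    intro t ht
    have hne : F μ t ≠ 0 := by omega
    exact Set.nonempty_of_ncard_ne_zero hne
  -- strict monotonicity of G
  have hGlt : ∀ a b : ℝ, 0 < a → a < b → 1 ≤ F μ b → G μ r a < G μ r b := by
    intro a b ha hab hFb
    have hFba : F μ b ≤ F μ a := hFanti a b ha hab.le
    have hFbpos : (0 : ℝ) < (F μ b : ℝ) := by exact_mod_cast hFb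
    have h1 : G μ r a ≤ a ^ p / (F μ b : ℝ) := by
      apply div_le_div_of_nonneg_left (Real.rpow_nonneg ha.le p) hFbpos
      exact_mod_cast hFba
    have h2 : a ^ p / (F μ b : ℝ) < b ^ p / (F μ b : ℝ) :=
      (div_lt_div_iff_of_pos_right hFbpos).mpr (Real.rpow_lt_rpow ha.le hab hp)
    calc G μ r a ≤ a ^ p / (F μ b : ℝ) := h1
    _ < b ^ p / (F μ b : ℝ) := h2
    _ = G μ r b := rfl
  -- choose u₀ := G μ r (μ (4 j₀))
  have h4j₀ : 1 ≤ 4 * j₀ := by omega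
  set t₁ : ℝ := μ (4 * j₀) with ht₁_def
  have ht₁pos : 0 < t₁ := hpos _ h4j₀
  have hFt₁ : 4 * j₀ ≤ F μ t₁ := hFmem t₁ ht₁pos (4 * j₀) h4j₀ le_rfl
  have hFt₁1 : 1 ≤ F μ t₁ := by omega
  refine ⟨G μ r t₁, ?_, ?_⟩
  · have hc : (0:ℝ) < (F μ t₁ : ℝ) := by exact_mod_cast hFt₁1
    exact div_pos (Real.rpow_pos_of_pos ht₁pos p) hc
  intro u hu hu₀
  set S := {t : ℝ | 0 < t ∧ 1 ≤ F μ t ∧ G μ r t ≤ u} with hS_def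
  -- a small element of S
  set t₂ := min (μ 1) (u ^ p⁻¹) with ht₂_def
  have ht₂pos : 0 < t₂ := lt_min (hpos 1 le_rfl) (Real.rpow_pos_of_pos hu _)
  have ht₂F : 1 ≤ F μ t₂ := hFmem t₂ ht₂pos 1 le_rfl (min_le_left _ _)
  have ht₂S : t₂ ∈ S := by
    refine ⟨ht₂pos, ht₂F, ?_⟩
    have h1 : G μ r t₂ ≤ t₂ ^ p :=
      div_le_self (Real.rpow_nonneg ht₂pos.le _) (by exact_mod_cast ht₂F)
    have h2 : t₂ ^ p ≤ (u ^ p⁻¹) ^ p :=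
      Real.rpow_le_rpow ht₂pos.le (min_le_right _ _) hp.le
    rw [Real.rpow_inv_rpow hu.le (ne_of_gt hp)] at h2
    exact h1.trans h2
  have hSne : S.Nonempty := ⟨t₂, ht₂S⟩
  have hSle : ∀ t ∈ S, t ≤ t₁ := by
    intro t ht
    by_contra hlt
    have h := hGlt t₁ t ht₁pos (not_le.mp hlt) ht.2.1
    exact absurd (ht.2.2.trans hu₀) (not_le.mpr h)
  have hbdd : BddAbove S := ⟨t₁, hSle⟩
  set T := sSup S with hT_def
  have hTle : T ≤ t₁ := csSup_le hSne hSle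
  have hTge : t₂ ≤ T := le_csSup hbdd ht₂S
  have hTpos : 0 < T := lt_of_lt_of_le ht₂pos hTge
  set k := F μ T with hk_def
  have hk4 : 4 * j₀ ≤ k := hFt₁.trans (hFanti T t₁ hTpos hTle)
  have hk1 : 1 ≤ k := by omega
  -- the set {j | 1 ≤ j ∧ T ≤ μ j} is Icc 1 k
  have hA : {j : ℕ | 1 ≤ j ∧ T ≤ μ j} = Set.Icc 1 k := by
    have h := stmt5_icc (stmt5_finite μ hlim hTpos) (fun j hj => hj.1)
      (fun i j hj hi hij => ⟨hi, hj.2.trans (hmono i j hi hij)⟩)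
    exact h
  set B := {j : ℕ | 1 ≤ j ∧ T < μ j} with hB_def
  have hBfin : B.Finite := (stmt5_finite μ hlim hTpos).subset (fun j hj => ⟨hj.1, hj.2.le⟩)
  set m := B.ncard with hm_def
  have hB : B = Set.Icc 1 m := stmt5_icc hBfin (fun j hj => hj.1)
    (fun i j hj hi hij => ⟨hi, lt_of_lt_of_le hj.2 (hmono i j hi hij)⟩)
  have hμk : T ≤ μ k := by
    have hmem : k ∈ Set.Icc 1 k := ⟨hk1, le_rfl⟩
    rw [← hA] at hmem
    exact hmem.2
  have hμeq : ∀ i, m < i → i ≤ k → μ i = T := by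
    intro i hmi hik
    have hi1 : 1 ≤ i := by omega
    have h1 : T ≤ μ i := by
      have hmem : i ∈ Set.Icc 1 k := ⟨hi1, hik⟩
      rw [← hA] at hmem
      exact hmem.2
    have h2 : ¬ T < μ i := by
      intro h
      have hmem : i ∈ B := ⟨hi1, h⟩
      rw [hB] at hmem
      exact absurd hmem.2 (by omega)
    linarith [not_lt.mp h2]
  -- k ≤ 2m + 1 from eigup
  have hkm : k ≤ 2 * m + 1 := by
    by_contra hcon
    push_neg at hcon
    obtain ⟨i, hij₀, hmi, h2ik⟩ : ∃ i, j₀ ≤ i ∧ m < i ∧ 2 * i ≤ k := by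
      rcases le_or_gt (m + 1) j₀ with hc | hc
      · exact ⟨j₀, le_rfl, by omega, by omega⟩
      · exact ⟨m + 1, by omega, by omega, by omega⟩
    have hi1 : 1 ≤ i := hj₀.trans hij₀
    have hik : i ≤ k := by omega
    have hμi : μ i = T := hμeq i hmi hik
    have h1 : T ≤ μ (2 * i) := hμk.trans (hmono (2 * i) k (by omega) h2ik)
    have h2 : μ (2 * i) ≤ (2:ℝ) ^ (-ν) * μ i := heigup i hi1 hij₀
    have h3 : (2:ℝ) ^ (-ν) < 1 :=
      Real.rpow_lt_one_of_one_lt_of_neg one_lt_two (by linarith)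
    rw [hμi] at h2
    nlinarith
  have hm1 : 1 ≤ m := by omega
  have hμm : T < μ m := by
    have hmem : m ∈ Set.Icc 1 m := ⟨hm1, le_rfl⟩
    rw [← hB] at hmem
    exact hmem.2
  -- the point s slightly above T
  set θ : ℝ := ((4:ℝ)/3) ^ p⁻¹ with hθ_def
  have hθ1 : 1 < θ :=
    Real.one_lt_rpow_iff_of_pos (by norm_num)
      |>.mpr (Or.inl ⟨by norm_num, by positivity⟩)
  set s := min (μ m) (T * θ) with hs_def
  have hsT : T < s := lt_min hμm ((lt_mul_iff_one_lt_right hTpos).mpr hθ1)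
  have hspos : 0 < s := hTpos.trans hsT
  have hFs : m ≤ F μ s := hFmem s hspos m hm1 (min_le_left _ _)
  have hFs1 : 1 ≤ F μ s := hm1.trans hFs
  have hsnot : s ∉ S := fun h => absurd (le_csSup hbdd h) (not_le.mpr hsT)
  have hus : u < G μ r s := by
    by_contra hle
    exact hsnot ⟨hspos, hFs1, not_lt.mp hle⟩
  -- estimate G s
  have hmR : (0:ℝ) < (m:ℝ) := by exact_mod_cast hm1
  have h1 : G μ r s ≤ s ^ p / (m:ℝ) := by
    apply div_le_div_of_nonneg_left (Real.rpow_nonneg hspos.le p) hmR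
    exact_mod_cast hFs
  have h2 : s ^ p ≤ T ^ p * (4/3) := by
    have ha : s ^ p ≤ (T * θ) ^ p :=
      Real.rpow_le_rpow hspos.le (min_le_right _ _) hp.le
    have hb : (T * θ) ^ p = T ^ p * (4/3) := by
      rw [Real.mul_rpow hTpos.le (le_of_lt (lt_trans one_pos hθ1)), hθ_def,
        Real.rpow_inv_rpow (by norm_num) (ne_of_gt hp)]
    rw [hb] at ha
    exact ha
  have hkR : (0:ℝ) < (k:ℝ) := by exact_mod_cast hk1
  have hk3m : (k:ℝ) ≤ 3 * (m:ℝ) := by exact_mod_cast (by omega : k ≤ 3 * m)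
  have h3 : T ^ p / (3 * (m:ℝ)) ≤ T ^ p / (k:ℝ) :=
    div_le_div_of_nonneg_left (Real.rpow_nonneg hTpos.le p) hkR hk3m
  have h4 : T ^ p * (4/3) / (m:ℝ) = 4 * (T ^ p / (3 * (m:ℝ))) := by
    field_simp
  have hGs : G μ r s = s ^ p / (F μ s : ℝ) := rfl
  have hGT : G μ r T = T ^ p / (k:ℝ) := rfl
  show u / 4 ≤ G μ r T
  rw [hGT]
  have h5 : s ^ p / (m:ℝ) ≤ T ^ p * (4/3) / (m:ℝ) :=
    (div_le_div_iff_of_pos_right hmR).mpr h2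
  rw [hGs] at hus
  linarith
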